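/- Every k-ladder has breadth at most k. -/

import Mathlib

lemma exists_le_cov {K : Type*} [Lattice K] (hLF : ∀ p : K, (Set.Iic p).Finite)
    {a b : K} (h : a < b) : ∃ c, a ≤ c ∧ c ⋖ b := by
  have hS : {t : K | a ≤ t ∧ t < b}.Finite :=
    (hLF b).subset (fun t ht => le_of_lt ht.2)
  obtain ⟨c, hc, hmax⟩ := Set.Finite.exists_maximalFor id _ hS ⟨a, le_rfl, h⟩
  refine ⟨c, hc.1, hc.2, fun d hcd hdb => ?_⟩
  have : d ≤ c := hmax ⟨le_trans hc.1 hcd.le, hdb⟩ hcd.le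
  exact absurd this (not_le_of_gt hcd)

/-- Every k-ladder (a lower finite lattice in which every element has at most k lower covers)
has breadth at most k: for all x₀,…,x_k and y₀,…,y_k, if xᵢ ≤ yⱼ whenever i ≠ j,
then xᵢ ≤ yᵢ for some i. -/
theorem stmt_2 (k : ℕ) (hk : 0 < k) (K : Type*) [Lattice K]
    (hLF : ∀ p : K, (Set.Iic p).Finite)
    (hcov : ∀ y : K, Set.ncard {x : K | x ⋖ y} ≤ k) :
    ∀ x y : Fin (k + 1) → K, (∀ i j, i ≠ j → x i ≤ y j) → ∃ i, x i ≤ y i := by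
  intro x y hxy
  by_contra hcon
  push_neg at hcon
  have hne : (Finset.univ : Finset (Fin (k+1))).Nonempty := Finset.univ_nonempty
  set z : K := Finset.univ.sup' hne x with hz
  have hene : ∀ i : Fin (k+1), (Finset.univ.erase i).Nonempty := by
    intro i
    have : 1 < (Finset.univ : Finset (Fin (k+1))).card := by
      simp [Finset.card_univ]; omega
    obtain ⟨j, hj⟩ := Finset.exists_mem_ne this i
    exact ⟨j, by simp [hj.2]⟩
  set w : Fin (k+1) → K := fun i => (Finset.univ.erase i).sup' (hene i) x with hw
  have hwy : ∀ i, w i ≤ y i := by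
    intro i
    apply Finset.sup'_le
    intro j hj
    exact hxy j i (Finset.ne_of_mem_erase hj)
  have hxw : ∀ i j, i ≠ j → x i ≤ w j := by
    intro i j hij
    exact Finset.le_sup' x (by simp [hij])
  have hwz : ∀ i, w i < z := by
    intro i
    refine lt_of_le_of_ne (Finset.sup'_le _ _ fun j hj => Finset.le_sup' x (Finset.mem_univ j)) ?_
    intro he
    exact hcon i (le_trans (le_trans (Finset.le_sup' x (Finset.mem_univ i)) he.symm.le) (hwy i))
  choose c hwc hcz using fun i => exists_le_cov hLF (hwz i)
  -- pigeonhole: two indices share a cover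
  have hCfin : {t : K | t ⋖ z}.Finite := (hLF z).subset (fun t ht => ht.le)
  have hinj : ¬ Function.Injective c := by
    intro hinj
    have h1 : (Set.range c).ncard = k + 1 := by
      rw [← Set.image_univ, Set.ncard_image_of_injective _ hinj, Set.ncard_univ]
      simp
    have h2 : (Set.range c).ncard ≤ k := by
      refine le_trans (Set.ncard_le_ncard ?_ hCfin) (hcov z)
      rintro t ⟨i, rfl⟩; exact hcz i
    omega
  rw [Function.not_injective_iff] at hinj
  obtain ⟨i, j, hcij, hij⟩ := hinj
  have hzle : z ≤ c i := by
    apply Finset.sup'_le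
    intro m _
    rcases eq_or_ne m i with rfl | hmi
    · exact le_trans (hxw m j (by exact fun h => hij h)) (hcij ▸ hwc j)
    · exact le_trans (hxw m i hmi) (hwc i)
  exact absurd hzle (not_le_of_gt (hcz i).lt)
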